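/- Let θ_1 ≤ λ_1 ≤ λ_2 ≤ θ_2 be positive reals with λ_1 + λ_2 = θ_1 + θ_2. Define V(x) = e^{-θ_1 x} + e^{-θ_2 x} - e^{-(θ_1+θ_2)x} - (e^{-λ_1 x} + e^{-λ_2 x} - e^{-(λ_1+λ_2)x}). Then V(x) ≥ 0 for all x ∈ ℝ. -/

import Mathlib

open Real

theorem stmt_2 (θ₁ θ₂ lam₁ lam₂ : ℝ) (h0 : 0 < θ₁) (h1 : θ₁ ≤ lam₁) (h2 : lam₁ ≤ lam₂)
    (h3 : lam₂ ≤ θ₂) (hsum : lam₁ + lam₂ = θ₁ + θ₂) :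
    ∀ x : ℝ,
      0 ≤ exp (-θ₁ * x) + exp (-θ₂ * x) - exp (-(θ₁ + θ₂) * x) -
        (exp (-lam₁ * x) + exp (-lam₂ * x) - exp (-(lam₁ + lam₂) * x)) := by
  intro x
  have hcancel : exp (-(lam₁ + lam₂) * x) = exp (-(θ₁ + θ₂) * x) := by rw [hsum]
  set d := lam₁ - θ₁ with hdd
  have hd : d = θ₂ - lam₂ := by simp [hdd]; linarith
  have hd0 : 0 ≤ d := by simp [hdd]; linarith
  have e1 : exp (-θ₁ * x) = exp (-lam₁ * x) * exp (d * x) := by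
    rw [← exp_add, hdd]; ring_nf
  have e2 : exp (-lam₂ * x) = exp (-θ₂ * x) * exp (d * x) := by
    rw [← exp_add, hd]; ring_nf
  have key : exp (-θ₁ * x) + exp (-θ₂ * x) - exp (-lam₁ * x) - exp (-lam₂ * x)
      = (exp (-lam₁ * x) - exp (-θ₂ * x)) * (exp (d * x) - 1) := by
    rw [e1, e2]; ring
  have hsign : 0 ≤ (exp (-lam₁ * x) - exp (-θ₂ * x)) * (exp (d * x) - 1) := by
    rcases le_or_gt 0 x with hx | hx
    · apply mul_nonneg
      · have : exp (-θ₂ * x) ≤ exp (-lam₁ * x) := by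
          apply exp_le_exp.2; nlinarith
        linarith
      · have : (1 : ℝ) ≤ exp (d * x) := by
          rw [← exp_zero]; exact exp_le_exp.2 (by nlinarith)
        linarith
    · apply mul_nonneg_of_nonpos_of_nonpos
      · have : exp (-lam₁ * x) ≤ exp (-θ₂ * x) := by
          apply exp_le_exp.2; nlinarith
        linarith
      · have : exp (d * x) ≤ 1 := by
          rw [← exp_zero]; exact exp_le_exp.2 (by nlinarith)
        linarith
  linarith
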